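/- arXiv:0912.2627 — 2 statements merged into one kernel-verified Lean document; each statement's English description precedes it below -/
import Mathlib

section
/- There exist a sequence of positive reals (b(i))_{i≥1} with sup_{i≥1} b(i) = ∞, a sequence of reals (c(i))_{i≥1}, and a constant β with 0 < β < 1/2, such that for every i ≥ 1: μ{ x ∈ X : |c(i) + ∑_{j=1}^{i} a_{μ,j}(x)| ≤ b(i) } ≥ 1 − 2β, μ{ x ∈ X : c(i) + ∑_{j=1}^{i} a_{μ,j}(x) ≥ b(i) } ≥ β, and μ{ x ∈ X : c(i) + ∑_{j=1}^{i} a_{μ,j}(x) ≤ −b(i) } ≥ β. -/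
open MeasureTheory ENNReal Filter

/-- The coordinate space: Lean index `n` is paper index `n+1`, so this is
`X_{n+1} = {0,1,…,5^{n+1}}`. -/
abbrev Xc (n : ℕ) : Type := Fin (5 ^ (n + 1) + 1)

/-- The weight of a point of `X_{n+1}`: `μ_{n+1}(0) = 1/2`, `μ_{n+1}(i) = 1/(2·5^{n+1})`
for `i ≠ 0`. -/
noncomputable def w (n : ℕ) (a : Xc n) : ℝ≥0∞ :=
  if a = 0 then 1 / 2 else 1 / (2 * 5 ^ (n + 1))

/-- The full product space `X = ∏_{n ≥ 1} X_n`. -/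
abbrev XX : Type := (n : ℕ) → Xc n

/-- The cylinder `Z_A` determined by a set `A` of configurations on a finite set `Γ`
of coordinates. -/
def cylSet (Γ : Finset ℕ) (A : Set ((i : Γ) → Xc i)) : Set XX :=
  {x | (fun i : Γ => x i) ∈ A}

/-- The point cylinder `Z_u`. -/
def cylPt (Γ : Finset ℕ) (u : (i : Γ) → Xc i) : Set XX := cylSet Γ {u}

/-- `μ` is the product measure `⊗ μ_n` iff every point cylinder gets the product of the
weights of its coordinates. (This property determines the product measure uniquely.) -/
def IsProductMeasure (μ : Measure XX) : Prop :=
  ∀ (Γ : Finset ℕ) (u : (i : Γ) → Xc i), μ (cylPt Γ u) = ∏ i : Γ, w i (u i)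

/-- The real-valued weight `μ_{n+1}(a)`. -/
noncomputable def wR (n : ℕ) (a : Xc n) : ℝ :=
  if a = 0 then 1 / 2 else 1 / (2 * 5 ^ (n + 1))

/-- The random variable `a_{μ,n+1}(x) = -log μ_{n+1}(x_{n+1})` (Lean index `n`). -/
noncomputable def aMu (n : ℕ) (x : XX) : ℝ := -Real.log (wR n (x n))

namespace St16
open Finset

/-! ### Measure of cylinder sets -/

variable {μ : Measure XX}

lemma restr_measurable (Γ : Finset ℕ) : Measurable (fun (x : XX) (i : Γ) => x i) :=
  measurable_pi_lambda _ (fun i => measurable_pi_apply (i : ℕ))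

lemma measurable_cylPt (Γ : Finset ℕ) (u : (i : Γ) → Xc i) : MeasurableSet (cylPt Γ u) :=
  (restr_measurable Γ) (measurableSet_singleton u)

lemma measure_cylSet (hμ : IsProductMeasure μ) (Γ : Finset ℕ)
    (A : Finset ((i : Γ) → Xc i)) :
    μ (cylSet Γ ↑A) = ∑ u ∈ A, ∏ i : Γ, w i (u i) := by
  have h1 : cylSet Γ ↑A = ⋃ u ∈ A, cylPt Γ u := by
    ext x
    simp only [cylSet, Set.mem_setOf_eq, Set.mem_iUnion, cylPt, Set.mem_singleton_iff]
    constructor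
    · intro h; exact ⟨_, h, rfl⟩
    · rintro ⟨u, hu, h⟩; rw [show (fun i : Γ => x i) = u from h]; exact hu
  rw [h1, measure_biUnion_finset ?_ (fun u _ => measurable_cylPt Γ u)]
  · exact Finset.sum_congr rfl fun u _ => hμ Γ u
  · intro u hu v hv huv
    simp only [Function.onFun, cylPt, cylSet]
    apply Set.disjoint_left.2
    intro x hx hx'
    simp only [Set.mem_setOf_eq, Set.mem_singleton_iff] at hx hx'
    exact huv (hx ▸ hx' ▸ rfl)

lemma sum_w_zero (n : ℕ) : ∑ a ∈ ({0} : Finset (Xc n)), w n a = 2⁻¹ := by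
  simp [w, one_div]

lemma sum_w_ne (n : ℕ) : ∑ a ∈ (univ.filter (· ≠ (0:Xc n))), w n a = 2⁻¹ := by
  have hcard : (univ.filter (· ≠ (0:Xc n))).card = 5 ^ (n+1) := by
    have : (univ.filter (· ≠ (0:Xc n))) = univ \ {0} := by ext a; simp
    rw [this, card_sdiff_of_subset (by simp)]; simp
  have h1 : ∑ a ∈ (univ.filter (· ≠ (0:Xc n))), w n a
      = ∑ _a ∈ (univ.filter (· ≠ (0:Xc n))), ((2 * 5 ^ (n+1) : ℝ≥0∞))⁻¹ := by
    refine Finset.sum_congr rfl (fun a ha => ?_)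
    simp only [mem_filter] at ha
    simp [w, ha.2, one_div]
  rw [h1, Finset.sum_const, hcard, nsmul_eq_mul]
  have h5 : ((5:ℝ≥0∞) ^ (n+1)) ≠ 0 := by positivity
  have h5' : ((5:ℝ≥0∞) ^ (n+1)) ≠ ⊤ := ENNReal.pow_ne_top (by norm_num)
  rw [ENNReal.mul_inv (Or.inl (by norm_num)) (Or.inl (by norm_num))]
  push_cast
  rw [mul_comm ((2:ℝ≥0∞))⁻¹, ← mul_assoc, ENNReal.mul_inv_cancel h5 h5', one_mul]

def bitsOf (Γ : Finset ℕ) (u : (j : Γ) → Xc j) : (j : Γ) → Bool := fun j => u j != 0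

lemma fiber_sum (Γ : Finset ℕ) (v : (j : Γ) → Bool) :
    ∑ u ∈ univ.filter (fun u => bitsOf Γ u = v), ∏ j : Γ, w j (u j)
      = 2⁻¹ ^ Γ.card := by
  classical
  set C : (j : Γ) → Finset (Xc j) :=
    fun j => if v j then univ.filter (· ≠ (0 : Xc j)) else {0} with hC
  have hfib : univ.filter (fun u => bitsOf Γ u = v) = Fintype.piFinset C := by
    ext u
    simp only [mem_filter, mem_univ, true_and, Fintype.mem_piFinset, hC, bitsOf]
    rw [funext_iff]
    refine forall_congr' fun j => ?_
    cases hv : v j <;> simp [hv, bitsOf, bne_eq_false_iff_eq, bne_iff_ne]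
  rw [hfib, ← Finset.prod_univ_sum]
  have : ∀ j : Γ, ∑ a ∈ C j, w j a = 2⁻¹ := by
    intro j
    cases hv : v j <;> simp only [hC, hv, if_true, if_false]
    · exact sum_w_zero j
    · exact sum_w_ne j
  rw [Finset.prod_congr rfl (fun j _ => this j), Finset.prod_const, Finset.card_univ,
    Fintype.card_coe]

lemma measure_bits (hμ : IsProductMeasure μ) (Γ : Finset ℕ)
    (Q : ((j : Γ) → Bool) → Prop) [DecidablePred Q] :
    μ (cylSet Γ {u | Q (bitsOf Γ u)})
      = ((univ.filter Q).card : ℝ≥0∞) * 2⁻¹ ^ Γ.card := by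
  classical
  have hA : ({u | Q (bitsOf Γ u)} : Set ((j : Γ) → Xc j))
      = ↑(univ.filter (fun u => Q (bitsOf Γ u))) := by ext u; simp
  rw [hA, measure_cylSet hμ]
  rw [← Finset.sum_fiberwise_of_maps_to
      (g := bitsOf Γ) (t := univ.filter Q) (fun u hu => by simp_all)
      (fun u => ∏ j : Γ, w j (u j))]
  have key : ∀ v ∈ univ.filter Q,
      (∑ u ∈ (univ.filter fun u => Q (bitsOf Γ u)).filter (fun u => bitsOf Γ u = v),
        ∏ j : Γ, w j (u j)) = 2⁻¹ ^ Γ.card := by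
    intro v hv
    simp only [mem_filter, mem_univ, true_and] at hv
    rw [Finset.filter_filter]
    rw [show (univ.filter fun u => Q (bitsOf Γ u) ∧ bitsOf Γ u = v)
        = univ.filter (fun u => bitsOf Γ u = v) from
      Finset.filter_congr (fun u _ => by
        constructor
        · rintro ⟨_, h⟩; exact h
        · intro h; exact ⟨h ▸ hv, h⟩)]
    exact fiber_sum Γ v
  rw [Finset.sum_congr rfl key, Finset.sum_const, nsmul_eq_mul]

/-! ### Combinatorics of bit vectors -/

abbrev Gam (i : ℕ) : Finset ℕ := Finset.range i
abbrev Bits (i : ℕ) := (j : Gam i) → Bool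

def cf (j : ℕ) : ℤ := (j : ℤ) + 1
def Nv {i : ℕ} (v : Bits i) : ℤ := ∑ j : Gam i, (if v j then cf j else 0)
def Tv (i : ℕ) : ℤ := ∑ j : Gam i, cf j
def Zv {i : ℕ} (v : Bits i) : ℤ := 2 * Nv v - Tv i

def cnt (i : ℕ) (P : ℤ → Prop) [DecidablePred P] : ℕ :=
  (univ.filter fun v : Bits i => P (Zv v)).card

lemma card_bits (i : ℕ) : Fintype.card (Bits i) = 2 ^ i := by
  rw [Fintype.card_fun]
  simp [Fintype.card_coe]

lemma cnt_congr (i : ℕ) (P Q : ℤ → Prop) [DecidablePred P] [DecidablePred Q]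
    (h : ∀ z, P z ↔ Q z) : cnt i P = cnt i Q := by
  unfold cnt; congr 1; exact Finset.filter_congr fun v _ => by
    simpa using h (Zv v)

lemma Zv_flipAll {i : ℕ} (v : Bits i) : Zv (fun j => !v j) = -Zv v := by
  have hN : Nv (fun j => !v j) = Tv i - Nv v := by
    unfold Nv Tv
    rw [← Finset.sum_sub_distrib]
    exact Finset.sum_congr rfl fun j _ => by cases h : v j <;> simp [h]
  unfold Zv; rw [hN]; ring

lemma cnt_neg (i : ℕ) (P : ℤ → Prop) [DecidablePred P] :
    cnt i P = cnt i (fun z => P (-z)) := by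
  unfold cnt
  apply Finset.card_bij' (fun v _ => fun j => !v j) (fun v _ => fun j => !v j)
  · intro v hv
    simp only [mem_filter, mem_univ, true_and] at hv ⊢
    rw [Zv_flipAll v, neg_neg]; exact hv
  · intro v hv
    simp only [mem_filter, mem_univ, true_and] at hv ⊢
    have h2 := Zv_flipAll v
    simpa [h2] using hv
  · intro v _; funext j; simp
  · intro v _; funext j; simp

lemma cnt_partition (i : ℕ) (P : ℤ → Prop) [DecidablePred P] :
    cnt i P + cnt i (fun z => ¬ P z) = 2 ^ i := by
  classical
  unfold cnt
  rw [Finset.card_filter_add_card_filter_not]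
  rw [Finset.card_univ, card_bits]

def jtop (i : ℕ) (hi : 1 ≤ i) : Gam i := ⟨i - 1, by simp [Gam]; omega⟩

def ft {i : ℕ} (hi : 1 ≤ i) (v : Bits i) : Bits i :=
  fun j => if j = jtop i hi then !v j else v j

def fr {i : ℕ} (hi : 1 ≤ i) (v : Bits i) : Bits i :=
  fun j => if j = jtop i hi then v j else !v j

section Top
variable {i : ℕ} (hi : 1 ≤ i)

lemma cf_jtop : cf ((jtop i hi : ℕ)) = (i : ℤ) := by
  simp [cf, jtop]; omega

lemma Nv_fr (v : Bits i) :
    Nv (fr hi v) = Tv i - Nv v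
      + (2 * (if v (jtop i hi) then cf (jtop i hi) else 0) - cf (jtop i hi)) := by
  unfold Nv Tv
  have : ∀ j : Gam i, (if fr hi v j then cf j else 0)
      = (cf j - (if v j then cf j else 0))
        + (if j = jtop i hi
            then (2 * (if v (jtop i hi) then cf (jtop i hi) else 0) - cf (jtop i hi)) else 0) := by
    intro j
    by_cases h : j = jtop i hi
    · subst h; cases hv : v (jtop i hi) <;> simp [fr, hv] <;> ring
    · cases hv : v j <;> simp [fr, h, hv]
  rw [Finset.sum_congr rfl (fun j _ => this j), Finset.sum_add_distrib,
    Finset.sum_ite_eq' univ (jtop i hi), Finset.sum_sub_distrib]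
  simp

lemma Zv_fr_top (v : Bits i) (hv : v (jtop i hi) = true) :
    Zv (fr hi v) = 2 * (i : ℤ) - Zv v := by
  unfold Zv
  rw [Nv_fr hi v, hv, if_pos rfl, cf_jtop hi]
  ring

lemma card_top : 2 * (univ.filter fun v : Bits i => v (jtop i hi) = true).card = 2 ^ i := by
  have hbij : (univ.filter fun v : Bits i => v (jtop i hi) = true).card
      = (univ.filter fun v : Bits i => ¬ (v (jtop i hi) = true)).card := by
    apply Finset.card_bij' (fun v _ => ft hi v) (fun v _ => ft hi v)
    · intro v hv
      simp only [mem_filter, mem_univ, true_and] at hv ⊢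
      simp [ft, hv]
    · intro v hv
      simp only [mem_filter, mem_univ, true_and] at hv ⊢
      simp only [Bool.not_eq_true] at hv
      simp [ft, hv]
    · intro v _; funext j; by_cases h : j = jtop i hi <;> simp [ft, h]
    · intro v _; funext j; by_cases h : j = jtop i hi <;> simp [ft, h]
  have h := Finset.card_filter_add_card_filter_not
    (s := (univ : Finset (Bits i))) (fun v : Bits i => v (jtop i hi) = true)
  rw [Finset.card_univ, card_bits] at h
  rw [← hbij] at h
  generalize hA : (univ.filter fun v : Bits i => v (jtop i hi) = true).card = a at h ⊢
  generalize hP : 2 ^ i = p at h ⊢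
  clear hbij hA hP
  omega

lemma F2 (hi : 1 ≤ i) : 2 ^ i < 8 * cnt i (fun z => (i : ℤ) ≤ z) := by
  classical
  set s1 := univ.filter (fun v : Bits i => v (jtop i hi) = true ∧ (i:ℤ) ≤ Zv v) with hs1
  set s2 := univ.filter (fun v : Bits i => v (jtop i hi) = true ∧ Zv v ≤ (i:ℤ)) with hs2
  have hcards : s2.card = s1.card := by
    apply Finset.card_bij' (fun v _ => fr hi v) (fun v _ => fr hi v)
    · intro v hv
      simp only [hs1, hs2, mem_filter, mem_univ, true_and] at hv ⊢
      refine ⟨by simp [fr, hv.1], ?_⟩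
      rw [Zv_fr_top hi v hv.1]; omega
    · intro v hv
      simp only [hs1, hs2, mem_filter, mem_univ, true_and] at hv ⊢
      refine ⟨by simp [fr, hv.1], ?_⟩
      rw [Zv_fr_top hi v hv.1]; omega
    · intro v _; funext j; by_cases h : j = jtop i hi <;> simp [fr, h]
    · intro v _; funext j; by_cases h : j = jtop i hi <;> simp [fr, h]
  have hsub : (univ.filter fun v : Bits i => v (jtop i hi) = true) ⊆ s1 ∪ s2 := by
    intro v hv
    simp only [mem_filter, mem_univ, true_and] at hv
    simp only [hs1, hs2, Finset.mem_union, mem_filter, mem_univ, true_and]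
    rcases le_total ((i:ℤ)) (Zv v) with h | h
    · exact Or.inl ⟨hv, h⟩
    · exact Or.inr ⟨hv, h⟩
  have h1 : (univ.filter fun v : Bits i => v (jtop i hi) = true).card ≤ s1.card + s2.card :=
    le_trans (Finset.card_le_card hsub) (Finset.card_union_le _ _)
  have h2 : s1.card ≤ cnt i (fun z => (i:ℤ) ≤ z) := by
    apply Finset.card_le_card
    intro v hv
    simp only [hs1, mem_filter, mem_univ, true_and] at hv ⊢
    exact hv.2
  have h3 := card_top hi
  have h4 : 0 < 2 ^ i := by positivity
  generalize hA : s1.card = a at h1 h2 hcards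
  generalize hB : s2.card = bb at h1 hcards
  generalize hC : (univ.filter fun v : Bits i => v (jtop i hi) = true).card = cc at h1 h3
  generalize hD : cnt i (fun z => (i : ℤ) ≤ z) = d at h2 ⊢
  generalize hP : 2 ^ i = p at h3 h4 ⊢
  clear hA hB hC hD hP hsub hs1 hs2 s1 s2
  omega

end Top

lemma Zv_le_Tv {i : ℕ} (v : Bits i) : Zv v ≤ Tv i := by
  have hN : Nv v ≤ Tv i := by
    unfold Nv Tv
    refine Finset.sum_le_sum fun j _ => ?_
    have : (0:ℤ) ≤ cf j := by unfold cf; positivity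
    split <;> omega
  unfold Zv; omega

lemma Tv_le {i : ℕ} : Tv i ≤ (i:ℤ) * i := by
  unfold Tv
  calc ∑ j : Gam i, cf j ≤ ∑ _j : Gam i, (i:ℤ) := by
        refine Finset.sum_le_sum fun j _ => ?_
        have := j.2
        simp only [Gam, Finset.mem_range] at this
        unfold cf; omega
    _ = (i:ℤ) * i := by
        rw [Finset.sum_const, Finset.card_univ, Fintype.card_coe, Finset.card_range,
          nsmul_eq_mul]
        try ring

lemma exists_quantile (i : ℕ) : ∃ n : ℕ, 8 * cnt i (fun z => (n:ℤ) < z) ≤ 2 ^ i := by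
  refine ⟨i * i, ?_⟩
  have hempty : cnt i (fun z => ((i*i : ℕ):ℤ) < z) = 0 := by
    unfold cnt
    rw [Finset.card_eq_zero, Finset.filter_eq_empty_iff]
    intro v _
    have h1 := Zv_le_Tv v
    have h2 := Tv_le (i := i)
    push_cast
    omega
  rw [hempty]
  positivity

noncomputable def mQ (i : ℕ) : ℕ := Nat.find (exists_quantile i)

lemma mq1 (i : ℕ) : 8 * cnt i (fun z => ((mQ i : ℕ):ℤ) < z) ≤ 2 ^ i :=
  Nat.find_spec (exists_quantile i)

lemma mq2 {i : ℕ} (hi : 1 ≤ i) : i ≤ mQ i := by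
  rw [mQ, Nat.le_find_iff]
  intro n hn
  rw [not_le]
  calc 2 ^ i < 8 * cnt i (fun z => (i:ℤ) ≤ z) := F2 hi
    _ ≤ 8 * cnt i (fun z => (n:ℤ) < z) := by
        refine Nat.mul_le_mul_left 8 (Finset.card_le_card fun v hv => ?_)
        simp only [Finset.mem_filter, Finset.mem_univ, true_and] at hv ⊢
        omega

lemma mq3 {i : ℕ} (hi : 1 ≤ i) : 2 ^ i < 8 * cnt i (fun z => ((mQ i : ℕ):ℤ) ≤ z) := by
  have hpos : 1 ≤ mQ i := le_trans hi (mq2 hi)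
  have hmin : ¬ 8 * cnt i (fun z => ((mQ i - 1 : ℕ):ℤ) < z) ≤ 2 ^ i :=
    Nat.find_min (exists_quantile i) (show mQ i - 1 < mQ i by omega)
  rw [not_le] at hmin
  calc 2 ^ i < 8 * cnt i (fun z => ((mQ i - 1 : ℕ):ℤ) < z) := hmin
    _ = 8 * cnt i (fun z => ((mQ i : ℕ):ℤ) ≤ z) := by
        congr 1
        refine cnt_congr i _ _ fun z => ?_
        omega

lemma cnt_le_neg (i m : ℕ) : cnt i (fun z => z ≤ -((m:ℕ):ℤ)) = cnt i (fun z => ((m:ℕ):ℤ) ≤ z) := by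
  rw [cnt_neg i (fun z => ((m:ℕ):ℤ) ≤ z)]
  exact cnt_congr i _ _ fun z => by omega

lemma cnt_lt_neg (i m : ℕ) : cnt i (fun z => z < -((m:ℕ):ℤ)) = cnt i (fun z => ((m:ℕ):ℤ) < z) := by
  rw [cnt_neg i (fun z => ((m:ℕ):ℤ) < z)]
  exact cnt_congr i _ _ fun z => by omega

lemma middle_count (i m : ℕ) :
    cnt i (fun z => |z| ≤ (m:ℤ)) + (cnt i (fun z => (m:ℤ) < z) + cnt i (fun z => z < -(m:ℤ)))
      = 2 ^ i := by
  classical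
  rw [← cnt_partition i (fun z => |z| ≤ (m:ℤ))]
  congr 1
  unfold cnt
  rw [show (univ.filter fun v : Bits i => ¬ |Zv v| ≤ (m:ℤ))
      = (univ.filter fun v : Bits i => (m:ℤ) < Zv v) ∪ (univ.filter fun v : Bits i => Zv v < -(m:ℤ)) from ?_]
  · rw [Finset.card_union_of_disjoint]
    rw [Finset.disjoint_filter]
    intro v _ h1 h2
    omega
  · ext v
    simp only [Finset.mem_filter, Finset.mem_univ, true_and, Finset.mem_union]
    rw [abs_le]
    omega

/-! ### ENNReal arithmetic -/

lemma keyE (q p K n : ℕ) (hp : p ≠ 0) (h : q * 2 ^ n ≤ p * K) :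
    (q : ℝ≥0∞) / p ≤ (K : ℝ≥0∞) * 2⁻¹ ^ n := by
  have h2 : ((2:ℝ≥0∞) ^ n) ≠ 0 := by positivity
  have h2' : ((2:ℝ≥0∞) ^ n) ≠ ⊤ := ENNReal.pow_ne_top (by norm_num)
  rw [← ENNReal.inv_pow, ← div_eq_mul_inv]
  rw [ENNReal.div_le_iff (by exact_mod_cast hp) (by exact ENNReal.natCast_ne_top p)]
  rw [mul_comm, ← mul_div_assoc, ENNReal.le_div_iff_mul_le (Or.inl h2) (Or.inl h2')]
  exact_mod_cast h

/-! ### The real-valued sums -/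

lemma aMu_eq (j : ℕ) (x : XX) :
    aMu j x = Real.log 2 + (if x j != 0 then ((j:ℝ) + 1) else 0) * Real.log 5 := by
  unfold aMu wR
  by_cases h : x j = 0
  · rw [if_pos h]
    simp [h, one_div, Real.log_inv]
  · rw [if_neg h]
    have hb : (x j != 0) = true := by simp [h]
    rw [hb, if_pos rfl, one_div, Real.log_inv, neg_neg,
      Real.log_mul (by norm_num) (by positivity), Real.log_pow]
    push_cast
    ring

lemma sum_aMu (i : ℕ) (x : XX) :
    ∑ j ∈ Finset.range i, aMu j x
      = (i:ℝ) * Real.log 2 + ((Nv (fun j : Gam i => x j != 0) : ℤ) : ℝ) * Real.log 5 := by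
  rw [← Finset.sum_coe_sort (Finset.range i) (fun j => aMu j x)]
  rw [Finset.sum_congr rfl (fun (j : Gam i) _ => aMu_eq (j:ℕ) x)]
  rw [Finset.sum_add_distrib, Finset.sum_const, ← Finset.sum_mul]
  congr 1
  · rw [Finset.card_univ, Fintype.card_coe, Finset.card_range, nsmul_eq_mul]
  · congr 1
    unfold Nv cf
    push_cast
    exact Finset.sum_congr rfl fun j _ => by split <;> simp

end St16

theorem statement16 (μ : Measure XX) (hμ : IsProductMeasure μ) :
    ∃ (b c : ℕ → ℝ) (β : ℝ),
      (∀ i, 1 ≤ i → 0 < b i) ∧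
      (∀ M : ℝ, ∃ i, 1 ≤ i ∧ M < b i) ∧
      0 < β ∧ β < 1 / 2 ∧
      ∀ i, 1 ≤ i →
        ENNReal.ofReal (1 - 2 * β) ≤
            μ {x | |c i + ∑ j ∈ Finset.range i, aMu j x| ≤ b i} ∧
          ENNReal.ofReal β ≤ μ {x | b i ≤ c i + ∑ j ∈ Finset.range i, aMu j x} ∧
          ENNReal.ofReal β ≤ μ {x | c i + ∑ j ∈ Finset.range i, aMu j x ≤ -(b i)} := by
  open St16 Finset in
  classical
  set L : ℝ := Real.log 5 / 2 with hLdef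
  have hL : 0 < L := by
    have := Real.log_pos (by norm_num : (1:ℝ) < 5)
    rw [hLdef]; linarith
  refine ⟨fun i => L * (mQ i : ℝ),
    fun i => -((i:ℝ) * Real.log 2 + L * ((Tv i : ℤ) : ℝ)), 1/8, ?_, ?_, by norm_num, by norm_num, ?_⟩
  · intro i hi
    have h1 : (1:ℝ) ≤ (mQ i : ℝ) := by exact_mod_cast le_trans hi (mq2 hi)
    show 0 < L * (mQ i : ℝ)
    nlinarith
  · intro M
    obtain ⟨i, hi1, hi2⟩ : ∃ i : ℕ, 1 ≤ i ∧ M / L < (i:ℝ) := by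
      refine ⟨max 1 (⌈M / L⌉₊ + 1), le_max_left _ _, ?_⟩
      calc M / L ≤ (⌈M / L⌉₊ : ℝ) := Nat.le_ceil _
        _ < ((⌈M / L⌉₊ + 1 : ℕ) : ℝ) := by push_cast; linarith
        _ ≤ _ := by exact_mod_cast Nat.cast_le.2 (le_max_right 1 (⌈M / L⌉₊ + 1))
    refine ⟨i, hi1, ?_⟩
    have hmi : (i:ℝ) ≤ (mQ i : ℝ) := by exact_mod_cast mq2 hi1
    have h2 : M < L * i := by
      rw [div_lt_iff₀ hL] at hi2
      linarith [hi2]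
    show M < L * (mQ i : ℝ)
    nlinarith
  · intro i hi
    -- the central computation
    have hcsum : ∀ x : XX,
        -((i:ℝ) * Real.log 2 + L * ((Tv i : ℤ) : ℝ)) + ∑ j ∈ Finset.range i, aMu j x
          = L * ((Zv (fun j : Gam i => x j != 0) : ℤ) : ℝ) := by
      intro x
      rw [sum_aMu i x]
      unfold Zv
      push_cast
      rw [hLdef]
      ring
    have hmeas : ∀ (P : ℤ → Prop) [DecidablePred P],
        μ {x : XX | P (Zv (fun j : Gam i => x j != 0))}
          = (cnt i P : ℝ≥0∞) * 2⁻¹ ^ i := by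
      intro P _
      have hset : {x : XX | P (Zv (fun j : Gam i => x j != 0))}
          = cylSet (Gam i) {u | (fun v : Bits i => P (Zv v)) (bitsOf (Gam i) u)} := rfl
      rw [hset, measure_bits hμ (Gam i) (fun v : Bits i => P (Zv v))]
      rw [Finset.card_range]
      rfl
    set m : ℕ := mQ i with hm
    have habs : {x : XX | |(-((i:ℝ) * Real.log 2 + L * ((Tv i : ℤ) : ℝ))) + ∑ j ∈ Finset.range i, aMu j x| ≤ L * (m:ℝ)}
        = {x : XX | (fun z : ℤ => |z| ≤ (m:ℤ)) (Zv (fun j : Gam i => x j != 0))} := by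
      ext x
      simp only [Set.mem_setOf_eq]
      rw [hcsum x, abs_mul, abs_of_pos hL, mul_le_mul_iff_right₀ hL]
      constructor <;> intro h <;> exact_mod_cast h
    have hge : {x : XX | L * (m:ℝ) ≤ (-((i:ℝ) * Real.log 2 + L * ((Tv i : ℤ) : ℝ))) + ∑ j ∈ Finset.range i, aMu j x}
        = {x : XX | (fun z : ℤ => (m:ℤ) ≤ z) (Zv (fun j : Gam i => x j != 0))} := by
      ext x
      simp only [Set.mem_setOf_eq]
      rw [hcsum x, mul_le_mul_iff_right₀ hL]
      constructor <;> intro h <;> exact_mod_cast h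
    have hle : {x : XX | (-((i:ℝ) * Real.log 2 + L * ((Tv i : ℤ) : ℝ))) + ∑ j ∈ Finset.range i, aMu j x ≤ -(L * (m:ℝ))}
        = {x : XX | (fun z : ℤ => z ≤ -(m:ℤ)) (Zv (fun j : Gam i => x j != 0))} := by
      ext x
      simp only [Set.mem_setOf_eq]
      rw [hcsum x, ← mul_neg, mul_le_mul_iff_right₀ hL]
      constructor <;> intro h <;> exact_mod_cast h
    -- counting facts
    have c1 := mq1 i
    have c2 := mq3 hi
    have c3 := middle_count i m
    have c4 := cnt_le_neg i m
    have c5 := cnt_lt_neg i m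
    rw [← hm] at c1 c2
    refine ⟨?_, ?_, ?_⟩
    · rw [habs, hmeas (fun z : ℤ => |z| ≤ (m:ℤ))]
      have hcard : 3 * 2 ^ i ≤ 4 * cnt i (fun z => |z| ≤ (m:ℤ)) := by
        rw [c5] at c3
        generalize hA : cnt i (fun z => |z| ≤ (m:ℤ)) = a at c3 ⊢
        generalize hB : cnt i (fun z => ((m:ℕ):ℤ) < z) = bb at c1 c3
        generalize hP : 2 ^ i = p at c1 c3 ⊢
        clear hA hB hP
        omega
      calc ENNReal.ofReal (1 - 2 * (1/8)) = (3:ℝ≥0∞) / 4 := by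
            rw [show (1 - 2 * (1/8) : ℝ) = 3/4 by norm_num,
              ENNReal.ofReal_div_of_pos (by norm_num)]
            norm_num
        _ ≤ _ := by exact_mod_cast keyE 3 4 _ i (by norm_num) hcard
    · rw [hge, hmeas (fun z : ℤ => (m:ℤ) ≤ z)]
      calc ENNReal.ofReal (1/8) = (1:ℝ≥0∞) / 8 := by
            rw [ENNReal.ofReal_div_of_pos (by norm_num)]
            norm_num
        _ ≤ _ := by exact_mod_cast keyE 1 8 _ i (by norm_num) (by rw [one_mul]; exact c2.le)
    · rw [hle, hmeas (fun z : ℤ => z ≤ -(m:ℤ))]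
      calc ENNReal.ofReal (1/8) = (1:ℝ≥0∞) / 8 := by
            rw [ENNReal.ofReal_div_of_pos (by norm_num)]
            norm_num
        _ ≤ _ := by exact_mod_cast keyE 1 8 (cnt i (fun z => z ≤ -(m:ℤ))) i (by norm_num) (by rw [one_mul, c4]; exact c2.le)
end

section
/- Let (b(i))_{i≥1} be positive reals with sup_{i≥1} b(i) = ∞, let (c(i))_{i≥1} be reals, and let 0 < β < 1/2 be such that μ{ x : |c(i) + ∑_{j=1}^{i} a_{μ,j}(x)| ≤ b(i) } ≥ 1 − 2β for every i. Then there exist a strictly increasing sequence (i(k))_{k≥1} of positive integers with b(i(k)) → ∞ as k → ∞, and a finite Borel measure λ on ℝ with λ(ℝ) ≤ 1 and λ([−1,1]) ≥ 1 − 2β, such that for every continuous compactly supported f : ℝ → ℝ, ∫_X f( b(i(k))^{-1}·( c(i(k)) + ∑_{j=1}^{i(k)} a_{μ,j}(x) ) ) dμ(x) → ∫_ℝ f dλ as k → ∞. -/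
open MeasureTheory ENNReal Filter

open Set Topology Function

section HellyAux

lemma IocToReal (ν : Measure ℝ) [IsFiniteMeasure ν] {a b : ℝ} (hab : a ≤ b) :
    (ν (Ioc a b)).toReal = (ν (Iic b)).toReal - (ν (Iic a)).toReal := by
  rw [← Iic_sdiff_Iic,
    measure_diff (Iic_subset_Iic.2 hab) measurableSet_Iic.nullMeasurableSet (measure_ne_top ν _),
    ENNReal.toReal_sub_of_le (measure_mono (Iic_subset_Iic.2 hab)) (measure_ne_top ν _)]

lemma measSumIoc (ν : Measure ℝ) (t : ℕ → ℝ) (hmono : Monotone t) (m : ℕ) :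
    ∑ i ∈ Finset.range m, ν (Ioc (t i) (t (i + 1))) = ν (Ioc (t 0) (t m)) := by
  induction m with
  | zero => simp
  | succ n ih =>
    rw [Finset.sum_range_succ, ih,
      ← measure_union (Set.Ioc_disjoint_Ioc_of_le le_rfl) measurableSet_Ioc,
      Set.Ioc_union_Ioc_eq_Ioc (hmono (Nat.zero_le n)) (hmono (Nat.le_succ n))]

lemma integralSumIoc (ν : Measure ℝ) {f : ℝ → ℝ} (hf : Integrable f ν)
    (t : ℕ → ℝ) (hmono : Monotone t) (m : ℕ) :
    ∑ i ∈ Finset.range m, ∫ x in Ioc (t i) (t (i + 1)), f x ∂ν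
      = ∫ x in Ioc (t 0) (t m), f x ∂ν := by
  induction m with
  | zero => simp
  | succ n ih =>
    rw [Finset.sum_range_succ, ih,
      ← setIntegral_union (Set.Ioc_disjoint_Ioc_of_le le_rfl) measurableSet_Ioc
        hf.integrableOn hf.integrableOn,
      Set.Ioc_union_Ioc_eq_Ioc (hmono (Nat.zero_le n)) (hmono (Nat.le_succ n))]

/-- Riemann-sum approximation of the integral of `f` against a (sub-probability) measure. -/
lemma riemannEst (ν : Measure ℝ) [IsFiniteMeasure ν] (hν1 : ν Set.univ ≤ 1)
    {f : ℝ → ℝ} (hf : Integrable f ν) (t : ℕ → ℝ) (hmono : Monotone t) (m : ℕ)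
    {ε : ℝ} (hε : 0 ≤ ε)
    (hosc : ∀ i < m, ∀ x ∈ Ioc (t i) (t (i + 1)), |f x - f (t (i + 1))| ≤ ε)
    (hsupp : ∀ x, x ∉ Ioc (t 0) (t m) → f x = 0) :
    |(∫ x, f x ∂ν) - ∑ i ∈ Finset.range m, f (t (i + 1)) * (ν (Ioc (t i) (t (i + 1)))).toReal|
      ≤ ε := by
  have h1 : ∫ x, f x ∂ν = ∑ i ∈ Finset.range m, ∫ x in Ioc (t i) (t (i + 1)), f x ∂ν := by
    rw [integralSumIoc ν hf t hmono m]
    exact (setIntegral_eq_integral_of_ae_compl_eq_zero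
      (Filter.Eventually.of_forall hsupp)).symm
  rw [h1, ← Finset.sum_sub_distrib]
  have hterm : ∀ i ∈ Finset.range m,
      |(∫ x in Ioc (t i) (t (i + 1)), f x ∂ν) - f (t (i + 1)) * (ν (Ioc (t i) (t (i + 1)))).toReal|
        ≤ ε * (ν (Ioc (t i) (t (i + 1)))).toReal := by
    intro i hi
    have hconst : ∫ _x in Ioc (t i) (t (i + 1)), f (t (i + 1)) ∂ν
        = (ν (Ioc (t i) (t (i + 1)))).toReal • f (t (i + 1)) := setIntegral_const _
    have hsub : (∫ x in Ioc (t i) (t (i + 1)), f x ∂ν)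
        - f (t (i + 1)) * (ν (Ioc (t i) (t (i + 1)))).toReal
        = ∫ x in Ioc (t i) (t (i + 1)), (f x - f (t (i + 1))) ∂ν := by
      rw [integral_sub hf.integrableOn (integrableOn_const (measure_lt_top _ _).ne),
        hconst, smul_eq_mul, mul_comm]
    rw [hsub]
    have := norm_setIntegral_le_of_norm_le_const (μ := ν)
      (s := Ioc (t i) (t (i + 1))) (f := fun x => f x - f (t (i + 1)))
      (C := ε) (measure_lt_top _ _)
      (fun x hx => by simpa [Real.norm_eq_abs] using hosc i (Finset.mem_range.1 hi) x hx)
    simpa [Real.norm_eq_abs, measureReal_def] using this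
  calc |∑ i ∈ Finset.range m,
        ((∫ x in Ioc (t i) (t (i + 1)), f x ∂ν)
          - f (t (i + 1)) * (ν (Ioc (t i) (t (i + 1)))).toReal)|
      ≤ ∑ i ∈ Finset.range m,
        |(∫ x in Ioc (t i) (t (i + 1)), f x ∂ν)
          - f (t (i + 1)) * (ν (Ioc (t i) (t (i + 1)))).toReal| :=
        Finset.abs_sum_le_sum_abs _ _
    _ ≤ ∑ i ∈ Finset.range m, ε * (ν (Ioc (t i) (t (i + 1)))).toReal :=
        Finset.sum_le_sum hterm
    _ = ε * ∑ i ∈ Finset.range m, (ν (Ioc (t i) (t (i + 1)))).toReal := by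
        rw [Finset.mul_sum]
    _ ≤ ε * 1 := by
        refine mul_le_mul_of_nonneg_left ?_ hε
        have : ∑ i ∈ Finset.range m, (ν (Ioc (t i) (t (i + 1)))).toReal
            = (∑ i ∈ Finset.range m, ν (Ioc (t i) (t (i + 1)))).toReal := by
          rw [ENNReal.toReal_sum (fun i _ => measure_ne_top _ _)]
        rw [this, measSumIoc ν t hmono m]
        have h2 : ν (Ioc (t 0) (t m)) ≤ 1 := le_trans (measure_mono (subset_univ _)) hν1
        calc (ν (Ioc (t 0) (t m))).toReal ≤ (1 : ℝ≥0∞).toReal :=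
              ENNReal.toReal_mono one_ne_top h2
          _ = 1 := by simp
    _ = ε := mul_one ε

/-- Uniform-continuity-type estimate for continuous compactly supported functions on `ℝ`. -/
lemma unifContEst {f : ℝ → ℝ} (hc : Continuous f) (hs : HasCompactSupport f)
    {ε : ℝ} (hε : 0 < ε) :
    ∃ δ : ℝ, 0 < δ ∧ δ ≤ 1 ∧ ∀ s t : ℝ, |s - t| ≤ δ → |f s - f t| ≤ ε := by
  obtain ⟨M, hM⟩ := (hs.isBounded).subset_closedBall (0 : ℝ)
  have hMsub : tsupport f ⊆ Icc (-M) M := by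
    intro x hx
    have := hM hx
    rw [Real.closedBall_eq_Icc] at this
    simpa using this
  have hUC : UniformContinuousOn f (Icc (-(M + 1)) (M + 1)) :=
    isCompact_Icc.uniformContinuousOn_of_continuous hc.continuousOn
  rw [Metric.uniformContinuousOn_iff] at hUC
  obtain ⟨δ₀, hδ₀, hδ⟩ := hUC ε hε
  refine ⟨min (δ₀ / 2) 1, by positivity, min_le_right _ _, ?_⟩
  intro s t hst
  have hst1 : |s - t| ≤ 1 := le_trans hst (min_le_right _ _)
  have hst2 : |s - t| < δ₀ := lt_of_le_of_lt (le_trans hst (min_le_left _ _)) (by linarith)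
  by_cases hK : s ∈ Icc (-(M + 1)) (M + 1) ∧ t ∈ Icc (-(M + 1)) (M + 1)
  · have := hδ s hK.1 t hK.2 (by rwa [Real.dist_eq])
    rw [Real.dist_eq] at this
    exact this.le
  · -- one of them is far out; then both are outside the support
    have habs : M + 1 < |s| ∨ M + 1 < |t| := by
      rcases not_and_or.1 hK with h | h
      · left
        by_contra h'
        exact h (abs_le.1 (not_lt.1 h'))
      · right
        by_contra h'
        exact h (abs_le.1 (not_lt.1 h'))
    have hboth : M < |s| ∧ M < |t| := by
      have h1 : |s| ≤ |t| + 1 := by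
        have := abs_sub_abs_le_abs_sub s t
        linarith
      have h2 : |t| ≤ |s| + 1 := by
        have := abs_sub_abs_le_abs_sub t s
        rw [abs_sub_comm] at this
        linarith
      rcases habs with h | h
      · exact ⟨by linarith, by linarith⟩
      · exact ⟨by linarith, by linarith⟩
    have hfs : f s = 0 := by
      apply image_eq_zero_of_notMem_tsupport
      intro hmem
      have := hMsub hmem
      rw [mem_Icc] at this
      have := abs_le.2 this
      linarith [hboth.1]
    have hft : f t = 0 := by
      apply image_eq_zero_of_notMem_tsupport
      intro hmem
      have := hMsub hmem
      rw [mem_Icc] at this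
      have := abs_le.2 this
      linarith [hboth.2]
    simp [hfs, hft, hε.le]

end HellyAux

section Helly

lemma hellySelection (ν : ℕ → Measure ℝ) (hp : ∀ k, IsProbabilityMeasure (ν k))
    (γ : ℝ) (hγ : ∀ k, ENNReal.ofReal γ ≤ ν k (Icc (-1 : ℝ) 1)) :
    ∃ φ : ℕ → ℕ, StrictMono φ ∧ ∃ lam : Measure ℝ, IsFiniteMeasure lam ∧
      lam Set.univ ≤ 1 ∧ ENNReal.ofReal γ ≤ lam (Icc (-1 : ℝ) 1) ∧
      ∀ f : ℝ → ℝ, Continuous f → HasCompactSupport f →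
        Tendsto (fun k => ∫ y, f y ∂(ν (φ k))) atTop (𝓝 (∫ y, f y ∂lam)) := by
  haveI := hp
  -- the (ℚ-indexed) CDFs, valued in the compact space `Icc 0 1`
  have hbound : ∀ k (s : Set ℝ), (ν k s).toReal ∈ Icc (0 : ℝ) 1 := by
    intro k s
    constructor
    · exact ENNReal.toReal_nonneg
    · have : ν k s ≤ 1 := prob_le_one
      calc (ν k s).toReal ≤ (1 : ℝ≥0∞).toReal := ENNReal.toReal_mono one_ne_top this
        _ = 1 := by simp
  set G : ℕ → ℚ → Icc (0 : ℝ) 1 := fun k q => ⟨(ν k (Iic (q : ℝ))).toReal, hbound k _⟩ with hG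
  obtain ⟨L, -, φ, hφ, hLconv⟩ :=
    (isCompact_univ : IsCompact (univ : Set (ℚ → Icc (0 : ℝ) 1))).tendsto_subseq
      (x := G) (fun n => mem_univ _)
  set ρ : ℚ → ℝ := fun q => (L q : ℝ) with hρdef
  have hρ : ∀ q : ℚ, Tendsto (fun k => (ν (φ k) (Iic (q : ℝ))).toReal) atTop (𝓝 (ρ q)) := by
    intro q
    have h1 : Tendsto (fun k => (G ∘ φ) k q) atTop (𝓝 (L q)) := (tendsto_pi_nhds.1 hLconv) q
    exact (continuous_subtype_val.tendsto _).comp h1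
  have hρ01 : ∀ q, ρ q ∈ Icc (0 : ℝ) 1 := fun q => (L q).2
  have hρmono : ∀ q q' : ℚ, q ≤ q' → ρ q ≤ ρ q' := by
    intro q q' hqq'
    refine le_of_tendsto_of_tendsto' (hρ q) (hρ q') (fun k => ?_)
    exact ENNReal.toReal_mono (measure_ne_top _ _)
      (measure_mono (Iic_subset_Iic.2 (by exact_mod_cast hqq')))
  -- the candidate limit CDF
  have hSne : ∀ t : ℝ, (ρ '' {q : ℚ | t < (q : ℝ)}).Nonempty := by
    intro t
    obtain ⟨q, hq⟩ := exists_rat_gt t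
    exact ⟨ρ q, ⟨q, hq, rfl⟩⟩
  have hSbdd : ∀ t : ℝ, BddBelow (ρ '' {q : ℚ | t < (q : ℝ)}) := by
    intro t
    exact ⟨0, fun y ⟨q, _, hq⟩ => hq ▸ (hρ01 q).1⟩
  set F0 : ℝ → ℝ := fun t => sInf (ρ '' {q : ℚ | t < (q : ℝ)}) with hF0
  have hFle : ∀ (t : ℝ) (q : ℚ), t < (q : ℝ) → F0 t ≤ ρ q := by
    intro t q hq
    exact csInf_le (hSbdd t) ⟨q, hq, rfl⟩
  have hleF : ∀ (t : ℝ) (q : ℚ), (q : ℝ) ≤ t → ρ q ≤ F0 t := by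
    intro t q hq
    refine le_csInf (hSne t) ?_
    rintro y ⟨q', hq', rfl⟩
    exact hρmono q q' (by exact_mod_cast le_of_lt (lt_of_le_of_lt hq hq'))
  have hF0mono : Monotone F0 := by
    intro s t hst
    exact csInf_le_csInf (hSbdd s) (hSne t)
      (image_mono (fun q hq => lt_of_le_of_lt hst hq))
  have hF00 : ∀ t, 0 ≤ F0 t := by
    intro t
    refine le_csInf (hSne t) ?_
    rintro y ⟨q, _, rfl⟩
    exact (hρ01 q).1
  have hF01 : ∀ t, F0 t ≤ 1 := by
    intro t
    obtain ⟨q, hq⟩ := exists_rat_gt t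
    exact (hFle t q hq).trans (hρ01 q).2
  have hF0rc : ∀ x : ℝ, ContinuousWithinAt F0 (Ici x) x := by
    intro x
    rw [ContinuousWithinAt]
    refine tendsto_order.2 ⟨?_, ?_⟩
    · intro a ha
      filter_upwards [self_mem_nhdsWithin] with s hs
      exact lt_of_lt_of_le ha (hF0mono hs)
    · intro a ha
      obtain ⟨y, ⟨q, hq, rfl⟩, hya⟩ := exists_lt_of_csInf_lt (hSne x) ha
      filter_upwards [Ico_mem_nhdsGE hq] with s hs
      exact lt_of_le_of_lt (hFle s q hs.2) hya
  set F : StieltjesFunction ℝ := ⟨F0, hF0mono, hF0rc⟩ with hFdef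
  -- convergence at continuity points
  have hGmono : ∀ k, Monotone (fun t : ℝ => (ν (φ k) (Iic t)).toReal) := by
    intro k s t hst
    exact ENNReal.toReal_mono (measure_ne_top _ _) (measure_mono (Iic_subset_Iic.2 hst))
  have hconvF : ∀ t : ℝ, ContinuousAt F0 t →
      Tendsto (fun k => (ν (φ k) (Iic t)).toReal) atTop (𝓝 (F0 t)) := by
    intro t hcont
    rw [Metric.tendsto_atTop]
    intro ε hε
    -- rational above with ρ close to F0 t
    have h1 : sInf (ρ '' {q : ℚ | t < (q : ℝ)}) < F0 t + ε / 2 := by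
      show F0 t < F0 t + ε / 2
      linarith
    obtain ⟨y, ⟨q, hq, rfl⟩, hy⟩ := exists_lt_of_csInf_lt (hSne t) h1
    -- point below with F0 close to F0 t
    have h2 : ∀ᶠ s in 𝓝 t, F0 t - ε / 2 < F0 s :=
      hcont.eventually (eventually_gt_nhds (by linarith))
    have h3 : ∀ᶠ s in 𝓝[<] t, F0 t - ε / 2 < F0 s ∧ s < t :=
      (h2.filter_mono nhdsWithin_le_nhds).and
        (eventually_mem_nhdsWithin.mono (fun s hs => hs))
    obtain ⟨s, hs1, hs2⟩ := h3.exists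
    obtain ⟨q', hsq', hq't⟩ := exists_rat_btwn hs2
    have hq'ρ : F0 t - ε / 2 < ρ q' := lt_of_lt_of_le hs1 (hFle s q' hsq')
    -- eventual bounds
    have hup := (hρ q).eventually (eventually_lt_nhds (show ρ q < ρ q + ε / 2 by linarith))
    have hlo := (hρ q').eventually (eventually_gt_nhds (show ρ q' - ε / 2 < ρ q' by linarith))
    obtain ⟨N, hN⟩ := eventually_atTop.1 (hup.and hlo)
    refine ⟨N, fun n hn => ?_⟩
    obtain ⟨hn1, hn2⟩ := hN n hn
    have hb1 : (ν (φ n) (Iic t)).toReal ≤ (ν (φ n) (Iic (q : ℝ))).toReal :=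
      hGmono n (le_of_lt hq)
    have hb2 : (ν (φ n) (Iic (q' : ℝ))).toReal ≤ (ν (φ n) (Iic t)).toReal :=
      hGmono n (le_of_lt hq't)
    rw [Real.dist_eq, abs_lt]
    constructor
    · linarith
    · linarith
  -- the limit measure
  set lam : Measure ℝ := F.measure with hlam
  have hrange : range F0 ⊆ Icc (0 : ℝ) 1 := by
    rintro y ⟨t, rfl⟩
    exact ⟨hF00 t, hF01 t⟩
  have hbddA : BddAbove (range F0) := ⟨1, fun y hy => (hrange hy).2⟩
  have hbddB : BddBelow (range F0) := ⟨0, fun y hy => (hrange hy).1⟩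
  have htop : Tendsto F0 atTop (𝓝 (⨆ t, F0 t)) := tendsto_atTop_ciSup hF0mono hbddA
  have hbot : Tendsto F0 atBot (𝓝 (⨅ t, F0 t)) := tendsto_atBot_ciInf hF0mono hbddB
  have hlamuniv : lam Set.univ = ENNReal.ofReal ((⨆ t, F0 t) - ⨅ t, F0 t) :=
    F.measure_univ hbot htop
  have hsup1 : (⨆ t, F0 t) ≤ 1 := ciSup_le hF01
  have hinf0 : 0 ≤ ⨅ t, F0 t := le_ciInf hF00
  have hlam1 : lam Set.univ ≤ 1 := by
    rw [hlamuniv]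
    calc ENNReal.ofReal ((⨆ t, F0 t) - ⨅ t, F0 t) ≤ ENNReal.ofReal 1 :=
          ENNReal.ofReal_le_ofReal (by linarith)
      _ = 1 := ENNReal.ofReal_one
  haveI hlamfin : IsFiniteMeasure lam := ⟨lt_of_le_of_lt hlam1 one_lt_top⟩
  -- mass in [-1,1]
  have hIcc : ENNReal.ofReal γ ≤ lam (Icc (-1 : ℝ) 1) := by
    rcases le_or_gt γ 0 with hγ0 | hγ0
    · simp [ENNReal.ofReal_eq_zero.2 hγ0]
    have hγk : ∀ k, γ ≤ (ν (φ k) (Icc (-1 : ℝ) 1)).toReal := by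
      intro k
      exact (ENNReal.ofReal_le_iff_le_toReal (measure_ne_top _ _)).1 (hγ (φ k))
    have key : ∀ (q' : ℚ), (q' : ℝ) < -1 → ρ q' + γ ≤ F0 1 := by
      intro q' hq'
      refine le_csInf (hSne 1) ?_
      rintro y ⟨q, hq, rfl⟩
      have hsub : Icc (-1 : ℝ) 1 ⊆ Ioc (q' : ℝ) (q : ℝ) := by
        intro x hx
        exact ⟨lt_of_lt_of_le hq' hx.1, le_of_lt (lt_of_le_of_lt hx.2 hq)⟩
      have hlower : ∀ k, (ν (φ k) (Iic (q' : ℝ))).toReal + γ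
          ≤ (ν (φ k) (Iic (q : ℝ))).toReal := by
        intro k
        have h1 : γ ≤ (ν (φ k) (Ioc (q' : ℝ) (q : ℝ))).toReal :=
          (hγk k).trans (ENNReal.toReal_mono (measure_ne_top _ _)
            (measure_mono hsub))
        have h2 : (ν (φ k) (Ioc (q' : ℝ) (q : ℝ))).toReal
            = (ν (φ k) (Iic (q : ℝ))).toReal - (ν (φ k) (Iic (q' : ℝ))).toReal :=
          IocToReal _ (by
            have hq1 : (1 : ℝ) < (q : ℝ) := hq
            linarith)
        linarith [h1, h2.symm ▸ h1]
      exact le_of_tendsto_of_tendsto' ((hρ q').add tendsto_const_nhds) (hρ q) hlower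
    have hleft : Function.leftLim F0 (-1 : ℝ) ≤ F0 1 - γ := by
      rw [hF0mono.leftLim_eq_sSup]
      refine csSup_le ⟨F0 (-2), ⟨-2, by norm_num, rfl⟩⟩ ?_
      rintro y ⟨s, hs, rfl⟩
      obtain ⟨q', hsq', hq'⟩ := exists_rat_btwn (show s < (-1 : ℝ) from hs)
      have h1 : F0 s ≤ ρ q' := hFle s q' hsq'
      have h2 := key q' hq'
      linarith
    have : lam (Icc (-1 : ℝ) 1) = ENNReal.ofReal (F0 1 - Function.leftLim F0 (-1)) :=
      F.measure_Icc _ _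
    rw [this]
    exact ENNReal.ofReal_le_ofReal (by linarith)
  -- main convergence statement
  refine ⟨φ, hφ, lam, hlamfin, hlam1, hIcc, ?_⟩
  intro f hfc hfs
  rw [Metric.tendsto_atTop]
  intro ε hε
  obtain ⟨δ, hδ0, hδ1, hδ⟩ := unifContEst hfc hfs (show (0:ℝ) < ε / 4 by linarith)
  -- support bound
  obtain ⟨M0, hM0⟩ := (hfs.isBounded).subset_closedBall (0 : ℝ)
  set M : ℝ := max M0 0 with hM
  have hMsub : tsupport f ⊆ Icc (-M) M := by
    intro x hx
    have := hM0 hx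
    rw [Real.closedBall_eq_Icc] at this
    simp only [zero_sub, zero_add] at this
    exact ⟨le_trans (by simp [hM]) this.1, le_trans this.2 (le_max_left _ _)⟩
  have hM0' : 0 ≤ M := le_max_right _ _
  -- choose partition points which are continuity points of F0
  have hDc : {t : ℝ | ¬ContinuousAt F0 t}.Countable := hF0mono.countable_not_continuousAt
  have hdense : Dense {t : ℝ | ¬ContinuousAt F0 t}ᶜ := hDc.dense_compl ℝ
  have hpt : ∀ i : ℕ, ∃ x : ℝ, ContinuousAt F0 x ∧
      x ∈ Ioo (-(M + 1) + i * (δ / 2)) (-(M + 1) + i * (δ / 2) + δ / 2) := by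
    intro i
    have hne : (Ioo (-(M + 1) + i * (δ / 2)) (-(M + 1) + i * (δ / 2) + δ / 2)).Nonempty := by
      refine ⟨-(M + 1) + i * (δ / 2) + δ / 4, ?_, ?_⟩ <;> simp <;> linarith
    obtain ⟨x, hx1, hx2⟩ := hdense.exists_mem_open isOpen_Ioo hne
    exact ⟨x, not_not.1 hx1, hx2⟩
  choose t ht1 ht2 using hpt
  have htlt : ∀ i, t i < t (i + 1) := by
    intro i
    have h1 := (ht2 i).2
    have h2 := (ht2 (i + 1)).1
    push_cast at h1 h2 ⊢
    nlinarith
  have htmono : Monotone t := (strictMono_nat_of_lt_succ htlt).monotone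
  have htgap : ∀ i, t (i + 1) - t i ≤ δ := by
    intro i
    have h1 := (ht2 i).1
    have h2 := (ht2 (i + 1)).2
    push_cast at h1 h2 ⊢
    nlinarith
  set m : ℕ := ⌈(2 * M + 2) * (2 / δ)⌉₊ with hm
  have htm : M < t m := by
    have h1 := (ht2 m).1
    have h2 : ((2 * M + 2) * (2 / δ) : ℝ) ≤ (m : ℝ) := Nat.le_ceil _
    have h3 : (2 * M + 2 : ℝ) ≤ (m : ℝ) * (δ / 2) := by
      have := mul_le_mul_of_nonneg_right h2 (show (0:ℝ) ≤ δ / 2 by linarith)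
      calc (2 * M + 2 : ℝ) = (2 * M + 2) * (2 / δ) * (δ / 2) := by
            field_simp
        _ ≤ (m : ℝ) * (δ / 2) := this
    linarith
  have ht0 : t 0 < -M := by
    have := (ht2 0).2
    push_cast at this
    linarith
  have hsupp : ∀ x, x ∉ Ioc (t 0) (t m) → f x = 0 := by
    intro x hx
    by_contra hfx
    have hxsupp : x ∈ tsupport f := subset_tsupport f hfx
    have := hMsub hxsupp
    rw [mem_Icc] at this
    exact hx ⟨lt_of_lt_of_le ht0 this.1, le_of_lt (lt_of_le_of_lt this.2 htm)⟩
  have hosc : ∀ i, ∀ x ∈ Ioc (t i) (t (i + 1)), |f x - f (t (i + 1))| ≤ ε / 4 := by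
    intro i x hx
    refine hδ x (t (i + 1)) ?_
    rw [abs_sub_comm, abs_le]
    constructor
    · linarith [hx.2, htgap i]
    · linarith [hx.1, htgap i]
  -- the Riemann sums
  set SUM : ℕ → ℝ := fun k => ∑ i ∈ Finset.range m,
    f (t (i + 1)) * (ν (φ k) (Ioc (t i) (t (i + 1)))).toReal with hSUM
  set SUML : ℝ := ∑ i ∈ Finset.range m,
    f (t (i + 1)) * (lam (Ioc (t i) (t (i + 1)))).toReal with hSUML
  have hconvSUM : Tendsto SUM atTop (𝓝 SUML) := by
    refine tendsto_finset_sum _ (fun i _ => ?_)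
    have hIocconv : Tendsto (fun k => (ν (φ k) (Ioc (t i) (t (i + 1)))).toReal) atTop
        (𝓝 ((lam (Ioc (t i) (t (i + 1)))).toReal)) := by
      have heq : ∀ k, (ν (φ k) (Ioc (t i) (t (i + 1)))).toReal
          = (ν (φ k) (Iic (t (i + 1)))).toReal - (ν (φ k) (Iic (t i))).toReal :=
        fun k => IocToReal _ (le_of_lt (htlt i))
      have heq2 : (lam (Ioc (t i) (t (i + 1)))).toReal = F0 (t (i + 1)) - F0 (t i) := by
        rw [hlam, F.measure_Ioc, ENNReal.toReal_ofReal (by linarith [hF0mono (le_of_lt (htlt i))])]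
      rw [heq2]
      simp only [heq]
      exact (hconvF _ (ht1 (i + 1))).sub (hconvF _ (ht1 i))
    exact hIocconv.const_mul _
  obtain ⟨N, hN⟩ := (Metric.tendsto_atTop.1 hconvSUM) (ε / 4) (by linarith)
  refine ⟨N, fun n hn => ?_⟩
  have hint1 : Integrable f (ν (φ n)) := hfc.integrable_of_hasCompactSupport hfs
  have hint2 : Integrable f lam := hfc.integrable_of_hasCompactSupport hfs
  have hr1 : |(∫ x, f x ∂(ν (φ n))) - SUM n| ≤ ε / 4 :=
    riemannEst (ν (φ n)) prob_le_one hint1 t htmono m (by linarith)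
      (fun i _ x hx => hosc i x hx) hsupp
  have hr2 : |(∫ x, f x ∂lam) - SUML| ≤ ε / 4 :=
    riemannEst lam hlam1 hint2 t htmono m (by linarith)
      (fun i _ x hx => hosc i x hx) hsupp
  have hr3 : |SUM n - SUML| < ε / 4 := by
    have := hN n hn
    rwa [Real.dist_eq] at this
  rw [Real.dist_eq]
  calc |(∫ y, f y ∂(ν (φ n))) - ∫ y, f y ∂lam|
      ≤ |(∫ y, f y ∂(ν (φ n))) - SUM n| + |SUM n - SUML| + |SUML - ∫ y, f y ∂lam| := by
        have := abs_sub_le (∫ y, f y ∂(ν (φ n))) (SUM n) (∫ y, f y ∂lam)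
        have h2 := abs_sub_le (SUM n) SUML (∫ y, f y ∂lam)
        linarith
    _ < ε := by
        rw [abs_sub_comm SUML] at *
        linarith [hr1, hr2, hr3]


end Helly

theorem statement18 (μ : Measure XX) (hμ : IsProductMeasure μ)
    (b c : ℕ → ℝ) (hbpos : ∀ i, 1 ≤ i → 0 < b i)
    (hbsup : ∀ M : ℝ, ∃ i, 1 ≤ i ∧ M < b i)
    (β : ℝ) (hβ0 : 0 < β) (hβ : β < 1 / 2)
    (h : ∀ i, 1 ≤ i → ENNReal.ofReal (1 - 2 * β) ≤
      μ {x | |c i + ∑ j ∈ Finset.range i, aMu j x| ≤ b i}) :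
    ∃ idx : ℕ → ℕ, StrictMono idx ∧ (∀ k, 1 ≤ idx k) ∧
      Filter.Tendsto (fun k => b (idx k)) Filter.atTop Filter.atTop ∧
      ∃ lam : Measure ℝ, IsFiniteMeasure lam ∧ lam Set.univ ≤ 1 ∧
        ENNReal.ofReal (1 - 2 * β) ≤ lam (Set.Icc (-1 : ℝ) 1) ∧
        ∀ f : ℝ → ℝ, Continuous f → HasCompactSupport f →
          Filter.Tendsto
            (fun k => ∫ x,
              f ((b (idx k))⁻¹ * (c (idx k) + ∑ j ∈ Finset.range (idx k), aMu j x)) ∂μ)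
            Filter.atTop (nhds (∫ y, f y ∂lam)) := by
  
  classical
  -- μ is a probability measure
  haveI hprobμ : IsProbabilityMeasure μ := by
    constructor
    have u : (i : (∅ : Finset ℕ)) → Xc i := fun i => absurd i.2 (Finset.notMem_empty _)
    have hcyl := hμ ∅ u
    have h1 : cylPt ∅ u = Set.univ := by
      rw [Set.eq_univ_iff_forall]
      intro x
      show (fun i : (∅ : Finset ℕ) => x i) ∈ ({u} : Set _)
      rw [Set.mem_singleton_iff]
      funext i
      exact absurd i.2 (Finset.notMem_empty _)
    haveI : IsEmpty ((∅ : Finset ℕ) : Type) := ⟨fun i => Finset.notMem_empty _ i.2⟩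
    rw [h1] at hcyl
    rw [hcyl, Finset.univ_eq_empty, Finset.prod_empty]
  -- a strictly monotone sequence of indices along which b tends to infinity
  obtain ⟨g, hgmono, hg1, hgtend⟩ :
      ∃ g : ℕ → ℕ, StrictMono g ∧ (∀ k, 1 ≤ g k) ∧
        Filter.Tendsto (fun k => b (g k)) Filter.atTop Filter.atTop := by
    set g : ℕ → ℕ := fun k => Nat.rec (hbsup 0).choose
      (fun k n => (hbsup (max ((k + 1 : ℕ) : ℝ)
        (((Finset.range (n + 1)).sup fun j => ⌈b j⌉₊ : ℕ) : ℝ))).choose) k with hg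
    have hspec0 : 1 ≤ g 0 ∧ (0 : ℝ) < b (g 0) := (hbsup 0).choose_spec
    have hspecS : ∀ k, 1 ≤ g (k + 1) ∧
        max ((k + 1 : ℕ) : ℝ) (((Finset.range (g k + 1)).sup fun j => ⌈b j⌉₊ : ℕ) : ℝ)
          < b (g (k + 1)) := fun k => (hbsup _).choose_spec
    have hlt : ∀ k, g k < g (k + 1) := by
      intro k
      by_contra hle
      push_neg at hle
      have h1 : b (g (k + 1)) ≤ (((Finset.range (g k + 1)).sup fun j => ⌈b j⌉₊ : ℕ) : ℝ) := by
        calc b (g (k + 1)) ≤ (⌈b (g (k + 1))⌉₊ : ℝ) := Nat.le_ceil _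
          _ ≤ _ := by
            exact_mod_cast Nat.cast_le.2 (Finset.le_sup (f := fun j => ⌈b j⌉₊)
              (Finset.mem_range.2 (Nat.lt_succ_of_le hle)))
      have h2 := (hspecS k).2
      have h3 : (((Finset.range (g k + 1)).sup fun j => ⌈b j⌉₊ : ℕ) : ℝ)
          ≤ max ((k + 1 : ℕ) : ℝ) _ := le_max_right _ _
      linarith
    have hmono : StrictMono g := strictMono_nat_of_lt_succ hlt
    have h1le : ∀ k, 1 ≤ g k := by
      intro k
      cases k with
      | zero => exact hspec0.1
      | succ n => exact (hspecS n).1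
    have hbk : ∀ k : ℕ, (k : ℝ) ≤ b (g k) := by
      intro k
      cases k with
      | zero => exact_mod_cast hspec0.2.le
      | succ n =>
        exact le_of_lt (lt_of_le_of_lt (le_max_left _ _) (hspecS n).2)
    exact ⟨g, hmono, h1le, tendsto_atTop_mono hbk tendsto_natCast_atTop_atTop⟩
  -- the normalized partial-sum maps are measurable
  have hT : ∀ i : ℕ, Measurable (fun x : XX =>
      (b i)⁻¹ * (c i + ∑ j ∈ Finset.range i, aMu j x)) := by
    intro i
    refine (measurable_const.add (Finset.measurable_sum _ (fun j _ => ?_))).const_mul _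
    exact (measurable_of_countable (fun a : Xc j => -Real.log (wR j a))).comp
      (measurable_pi_apply j)
  -- the push-forward measures
  set ν : ℕ → Measure ℝ := fun k =>
    μ.map (fun x => (b (g k))⁻¹ * (c (g k) + ∑ j ∈ Finset.range (g k), aMu j x)) with hν
  have hprob : ∀ k, IsProbabilityMeasure (ν k) :=
    fun k => Measure.isProbabilityMeasure_map (hT _).aemeasurable
  have hIcc : ∀ k, ENNReal.ofReal (1 - 2 * β) ≤ ν k (Set.Icc (-1 : ℝ) 1) := by
    intro k
    rw [hν]
    rw [Measure.map_apply (hT _) measurableSet_Icc]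
    have hb := hbpos _ (hg1 k)
    have hpre : (fun x : XX => (b (g k))⁻¹ * (c (g k) + ∑ j ∈ Finset.range (g k), aMu j x))
        ⁻¹' Set.Icc (-1 : ℝ) 1
        = {x | |c (g k) + ∑ j ∈ Finset.range (g k), aMu j x| ≤ b (g k)} := by
      ext x
      simp only [Set.mem_preimage, Set.mem_Icc, Set.mem_setOf_eq, ← abs_le]
      rw [abs_mul, abs_inv, abs_of_pos hb, inv_mul_le_iff₀ hb, mul_one]
    rw [hpre]
    exact h (g k) (hg1 k)
  obtain ⟨φ, hφ, lam, hfin, hle1, hIccb, hconv⟩ := hellySelection ν hprob (1 - 2 * β) hIcc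
  refine ⟨g ∘ φ, hgmono.comp hφ, fun k => hg1 _, hgtend.comp hφ.tendsto_atTop,
    lam, hfin, hle1, hIccb, ?_⟩
  intro f hfc hfs
  have htend := hconv f hfc hfs
  refine htend.congr (fun k => ?_)
  exact integral_map (hT _).aemeasurable hfc.aestronglyMeasurable
end
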